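/- For all integers 1 ≤ r ≤ d, the quantity τ := √(d/r) · Γ((r+1)/2)·Γ(d/2) / (Γ(r/2)·Γ((d+1)/2)) satisfies 1/√2 ≤ τ ≤ 1, where Γ denotes the Gamma function. -/

import Mathlib

open Real

noncomputable section

/-- τ = √(d/r) Γ((r+1)/2) Γ(d/2) / (Γ(r/2) Γ((d+1)/2)). -/
def tauConst (d r : ℕ) : ℝ :=
  Real.sqrt ((d : ℝ) / r) *
    (Real.Gamma (((r : ℝ) + 1) / 2) * Real.Gamma ((d : ℝ) / 2)) /
      (Real.Gamma ((r : ℝ) / 2) * Real.Gamma (((d : ℝ) + 1) / 2))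

namespace Stmt9Aux

/-- Wallis integral `∫₀^π sinⁿ`. -/
def V (n : ℕ) : ℝ := ∫ x in (0:ℝ)..π, Real.sin x ^ n

lemma V_pos (n : ℕ) : 0 < V n := by unfold V; exact integral_sin_pow_pos _

lemma V_succ_le (n : ℕ) : V (n + 1) ≤ V n := by
  unfold V; exact integral_sin_pow_succ_le _

lemma V_rec (n : ℕ) : V (n + 2) = ((n : ℝ) + 1) / ((n : ℝ) + 2) * V n := by
  have h := integral_sin_pow (a := 0) (b := π) n
  unfold V
  rw [h, Real.sin_zero, Real.sin_pi]
  norm_num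

lemma V_rec' (n : ℕ) : ((n : ℝ) + 2) * V (n + 2) = ((n : ℝ) + 1) * V n := by
  rw [V_rec]
  field_simp

lemma V_zero : V 0 = π := by simp [V]

lemma V_one : V 1 = 2 := by
  unfold V
  simp only [pow_one]
  rw [integral_sin]
  norm_num

/-- Cauchy–Schwarz (log-convexity) for Wallis integrals. -/
lemma V_sq_le (n : ℕ) : V (n + 1) ^ 2 ≤ V n * V (n + 2) := by
  have key : ∀ t : ℝ, 0 ≤ V n * (t * t) + (-2 * V (n + 1)) * t + V (n + 2) := by
    intro t
    have h0 : (0:ℝ) ≤ ∫ x in (0:ℝ)..π, Real.sin x ^ n * (Real.sin x - t) ^ 2 := by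
      apply intervalIntegral.integral_nonneg Real.pi_pos.le
      intro x hx
      have hs : 0 ≤ Real.sin x := Real.sin_nonneg_of_nonneg_of_le_pi hx.1 hx.2
      positivity
    have hfun : ∀ x : ℝ, Real.sin x ^ n * (Real.sin x - t) ^ 2
        = Real.sin x ^ (n + 2) - 2 * t * Real.sin x ^ (n + 1) + t ^ 2 * Real.sin x ^ n := by
      intro x; ring
    have hint : ∀ m : ℕ, IntervalIntegrable (fun x : ℝ => Real.sin x ^ m)
        MeasureTheory.volume 0 π := fun m =>
      (Real.continuous_sin.pow m).intervalIntegrable 0 π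
    have hexp : (∫ x in (0:ℝ)..π, Real.sin x ^ n * (Real.sin x - t) ^ 2)
        = V (n + 2) - 2 * t * V (n + 1) + t ^ 2 * V n := by
      calc (∫ x in (0:ℝ)..π, Real.sin x ^ n * (Real.sin x - t) ^ 2)
          = ∫ x in (0:ℝ)..π, (Real.sin x ^ (n + 2) - 2 * t * Real.sin x ^ (n + 1)
              + t ^ 2 * Real.sin x ^ n) := by
            simp only [hfun]
        _ = V (n + 2) - 2 * t * V (n + 1) + t ^ 2 * V n := by
            rw [intervalIntegral.integral_add (((hint (n+2)).sub ((hint (n+1)).const_mul _)))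
              ((hint n).const_mul _),
              intervalIntegral.integral_sub (hint (n+2)) ((hint (n+1)).const_mul _),
              intervalIntegral.integral_const_mul, intervalIntegral.integral_const_mul]
            rfl
    rw [hexp] at h0
    nlinarith
  have hd := discrim_le_zero key
  have hVn := V_pos n
  simp only [discrim] at hd
  nlinarith

/-- Bridge to the Gamma function. -/
lemma bridge : ∀ n : ℕ, V n * Real.Gamma ((n : ℝ) / 2 + 1)
    = Real.sqrt π * Real.Gamma (((n : ℝ) + 1) / 2) := by
  intro n
  induction n using Nat.twoStepInduction with
  | zero =>
    have h1 : ((0:ℕ) : ℝ) / 2 + 1 = 1 := by norm_num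
    have h2 : (((0:ℕ) : ℝ) + 1) / 2 = 1 / 2 := by norm_num
    rw [h1, h2, V_zero, Real.Gamma_one, Real.Gamma_one_half_eq,
      Real.mul_self_sqrt Real.pi_pos.le, mul_one]
  | one =>
    have h1 : ((1:ℕ) : ℝ) / 2 + 1 = 1 / 2 + 1 := by norm_num
    have h2 : (((1:ℕ) : ℝ) + 1) / 2 = 1 := by norm_num
    rw [h1, h2, V_one, Real.Gamma_one, Real.Gamma_add_one (by norm_num : (1:ℝ)/2 ≠ 0),
      Real.Gamma_one_half_eq, mul_one]
    ring
  | more n ih _ =>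
    have hc : ((n + 2 : ℕ) : ℝ) = (n : ℝ) + 2 := by push_cast; ring
    have e1 : ((n + 2 : ℕ) : ℝ) / 2 + 1 = ((n : ℝ) / 2 + 1) + 1 := by rw [hc]; ring
    have e2 : (((n + 2 : ℕ) : ℝ) + 1) / 2 = (((n : ℝ) + 1) / 2) + 1 := by rw [hc]; ring
    have g1 : Real.Gamma (((n : ℝ) / 2 + 1) + 1) = ((n : ℝ) / 2 + 1) * Real.Gamma ((n : ℝ) / 2 + 1) :=
      Real.Gamma_add_one (by positivity)
    have g2 : Real.Gamma ((((n : ℝ) + 1) / 2) + 1) = (((n : ℝ) + 1) / 2) * Real.Gamma (((n : ℝ) + 1) / 2) :=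
      Real.Gamma_add_one (by positivity)
    rw [e1, e2, g1, g2]
    have h2 : ((n : ℝ) + 2) ≠ 0 := by positivity
    apply mul_left_cancel₀ h2
    linear_combination ((n:ℝ)/2 + 1) * Real.Gamma ((n:ℝ)/2 + 1) * V_rec' n
      + (((n:ℝ)+1) * ((n:ℝ)/2 + 1)) * ih

lemma V_mul (n : ℕ) : V n * V (n + 1) = 2 * π / ((n : ℝ) + 1) := by
  induction n with
  | zero => rw [V_zero, V_one]; norm_num; ring
  | succ m ih =>
    have h := V_rec m
    have h1 : ((m : ℝ) + 2) ≠ 0 := by positivity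
    have h2 : ((m : ℝ) + 1) ≠ 0 := by positivity
    have : V (m + 1) * V (m + 2) = ((m : ℝ) + 1) / ((m : ℝ) + 2) * (V m * V (m + 1)) := by
      rw [h]; ring
    rw [show m + 1 + 1 = m + 2 from rfl, this, ih]
    push_cast
    field_simp
    ring

/-- One step of monotonicity of `s n = n Vₙ²`. -/
lemma s_step (n : ℕ) : (n : ℝ) * V n ^ 2 ≤ ((n : ℝ) + 1) * V (n + 1) ^ 2 := by
  cases n with
  | zero => simp; positivity
  | succ m =>
    have h1 := V_sq_le m
    have h2 := V_rec m
    have hm := V_pos m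
    have hm1 := V_pos (m + 1)
    have hm2 := V_pos (m + 2)
    have hkey : ((m : ℝ) + 1) * V (m + 1) ^ 2 ≤ ((m : ℝ) + 2) * V (m + 2) ^ 2 := by
      have hpos : (0:ℝ) < (m : ℝ) + 1 := by positivity
      have h5 : ((m : ℝ) + 1) * (V m * V (m + 2)) = ((m : ℝ) + 2) * V (m + 2) ^ 2 := by
        linear_combination (-(V (m + 2))) * V_rec' m
      nlinarith [h1, h5, hpos]
    push_cast
    show ((m : ℝ) + 1) * V (m + 1) ^ 2 ≤ ((m : ℝ) + 1 + 1) * V (m + 2) ^ 2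
    linarith [hkey]

lemma s_le {n m : ℕ} (h : n ≤ m) : (n : ℝ) * V n ^ 2 ≤ (m : ℝ) * V m ^ 2 := by
  induction m, h using Nat.le_induction with
  | base => exact le_refl _
  | succ k hk ih =>
    refine ih.trans ?_
    have := s_step k
    push_cast
    linarith

end Stmt9Aux

set_option maxHeartbeats 1600000

open Stmt9Aux

/-- For all integers `1 ≤ r ≤ d`, `1/√2 ≤ τ ≤ 1`. -/
theorem stmt9 (d r : ℕ) (hr : 1 ≤ r) (hrd : r ≤ d) :
    1 / Real.sqrt 2 ≤ tauConst d r ∧ tauConst d r ≤ 1 := by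
  obtain ⟨e, hde⟩ : ∃ e, d = e + 1 := ⟨d - 1, by omega⟩
  have hrpos : (0:ℝ) < (r : ℝ) := by exact_mod_cast hr
  have hr1 : (1:ℝ) ≤ (r : ℝ) := by exact_mod_cast hr
  have hdpos : (0:ℝ) < (d : ℝ) := by
    have : 1 ≤ d := le_trans hr hrd
    exact_mod_cast Nat.lt_of_lt_of_le Nat.zero_lt_one this
  have hdc : (d : ℝ) = (e : ℝ) + 1 := by rw [hde]; push_cast; ring
  have hΓr : 0 < Real.Gamma ((r : ℝ) / 2) := Real.Gamma_pos_of_pos (by positivity)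
  have hΓd1 : 0 < Real.Gamma (((d : ℝ) + 1) / 2) := Real.Gamma_pos_of_pos (by positivity)
  have hΓr1 : 0 < Real.Gamma (((r : ℝ) + 1) / 2) := Real.Gamma_pos_of_pos (by positivity)
  have hΓd : 0 < Real.Gamma ((d : ℝ) / 2) := Real.Gamma_pos_of_pos (by positivity)
  have hsπ : Real.sqrt π * Real.sqrt π = π := Real.mul_self_sqrt Real.pi_pos.le
  have hπ : (0:ℝ) < π := Real.pi_pos
  have hVr := V_pos r
  have hVe := V_pos e
  have hVd := V_pos d
  -- bridge at r
  have hbr0 := bridge r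
  have hΓradd : Real.Gamma ((r : ℝ) / 2 + 1) = ((r : ℝ) / 2) * Real.Gamma ((r : ℝ) / 2) :=
    Real.Gamma_add_one (by positivity)
  have hbr : ((r : ℝ) / 2) * V r * Real.Gamma ((r : ℝ) / 2)
      = Real.sqrt π * Real.Gamma (((r : ℝ) + 1) / 2) := by
    rw [← hbr0, hΓradd]; ring
  -- bridge at e = d - 1
  have hbe0 := bridge e
  have he1 : ((e : ℕ) : ℝ) / 2 + 1 = ((d : ℝ) + 1) / 2 := by rw [hdc]; ring
  have he2 : (((e : ℕ) : ℝ) + 1) / 2 = (d : ℝ) / 2 := by rw [hdc]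
  have hbe : V e * Real.Gamma (((d : ℝ) + 1) / 2) = Real.sqrt π * Real.Gamma ((d : ℝ) / 2) := by
    rw [← he1, ← he2]; exact hbe0
  -- eliminate √π by multiplying the two bridges
  have hprod : ((r : ℝ) / 2 * V r * V e)
        * (Real.Gamma ((r : ℝ) / 2) * Real.Gamma (((d : ℝ) + 1) / 2))
      = π * (Real.Gamma (((r : ℝ) + 1) / 2) * Real.Gamma ((d : ℝ) / 2)) := by
    linear_combination (V e * Real.Gamma (((d:ℝ)+1)/2)) * hbr
      + (Real.sqrt π * Real.Gamma (((r:ℝ)+1)/2)) * hbe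
      + (Real.Gamma (((r:ℝ)+1)/2) * Real.Gamma ((d:ℝ)/2)) * hsπ
  -- closed form of tau using V e
  have htau : tauConst d r = Real.sqrt ((d : ℝ) / r) * ((r : ℝ) * V r * V e) / (2 * π) := by
    unfold tauConst
    rw [div_eq_div_iff (by positivity) (by positivity)]
    linear_combination (-2 * Real.sqrt ((d:ℝ)/r)) * hprod
  -- V e in terms of V d
  have hVed : (d : ℝ) * (V e * V d) = 2 * π := by
    have h := V_mul e
    rw [hde] at *
    rw [h]
    push_cast
    field_simp
  have hVe' : V e = 2 * π / ((d : ℝ) * V d) := by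
    rw [eq_div_iff (by positivity)]
    linear_combination hVed
  -- closed form of tau using V d
  have htau2 : tauConst d r = Real.sqrt ((d : ℝ) / r) * ((r : ℝ) * V r) / ((d : ℝ) * V d) := by
    rw [htau, hVe']
    field_simp
  have htaupos : 0 < tauConst d r := by
    rw [htau2]
    have h1 : 0 < Real.sqrt ((d : ℝ) / r) := Real.sqrt_pos.mpr (by positivity)
    positivity
  have htausq : tauConst d r ^ 2 = ((r : ℝ) * V r ^ 2) / ((d : ℝ) * V d ^ 2) := by
    rw [htau2, div_pow, mul_pow, mul_pow, Real.sq_sqrt (by positivity : (0:ℝ) ≤ (d : ℝ) / r)]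
    field_simp
  -- lower bound on r V r ^ 2
  have hsr_lb : π ≤ (r : ℝ) * V r ^ 2 := by
    have h1 : V (r + 1) ≤ V r := V_succ_le r
    have h2 : V r * V (r + 1) = 2 * π / ((r : ℝ) + 1) := V_mul r
    have h3 : (r : ℝ) * (V r * V (r + 1)) ≤ (r : ℝ) * V r ^ 2 := by
      nlinarith [mul_le_mul_of_nonneg_left h1 hVr.le, hrpos]
    have h4 : π ≤ (r : ℝ) * (2 * π / ((r : ℝ) + 1)) := by
      rw [show (r : ℝ) * (2 * π / ((r : ℝ) + 1)) = ((r : ℝ) * (2 * π)) / ((r : ℝ) + 1) from by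
        ring, le_div_iff₀ (by positivity : (0:ℝ) < (r : ℝ) + 1)]
      nlinarith [mul_nonneg hπ.le (sub_nonneg.mpr hr1)]
    calc π ≤ (r : ℝ) * (2 * π / ((r : ℝ) + 1)) := h4
      _ = (r : ℝ) * (V r * V (r + 1)) := by rw [h2]
      _ ≤ (r : ℝ) * V r ^ 2 := h3
  -- upper bound on d V d ^ 2
  have hsd_ub : (d : ℝ) * V d ^ 2 ≤ 2 * π := by
    have h1 : V d ≤ V e := by rw [hde]; exact V_succ_le e
    nlinarith [mul_le_mul_of_nonneg_left h1 hVd.le, hdpos, hVed]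
  have hsd_pos : 0 < (d : ℝ) * V d ^ 2 := by positivity
  -- upper bound
  have hsq_le : tauConst d r ^ 2 ≤ 1 := by
    rw [htausq, div_le_one hsd_pos]
    exact s_le hrd
  have hub : tauConst d r ≤ 1 := by nlinarith
  -- lower bound
  have hsq_ge : 1 / 2 ≤ tauConst d r ^ 2 := by
    rw [htausq, le_div_iff₀ hsd_pos]
    nlinarith
  have hlb : 1 / Real.sqrt 2 ≤ tauConst d r := by
    have h1 : Real.sqrt (1 / 2) ≤ Real.sqrt (tauConst d r ^ 2) := Real.sqrt_le_sqrt hsq_ge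
    rw [Real.sqrt_sq htaupos.le] at h1
    have h2 : Real.sqrt ((1:ℝ) / 2) = 1 / Real.sqrt 2 := by
      rw [one_div, one_div, Real.sqrt_inv]
    rw [h2] at h1
    exact h1
  exact ⟨hlb, hub⟩

end
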